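/- Let A = (A1 A2) ∈ ℝ^{m×n}, τ > 0, and let (X̂1(W) X̂2(W)) be a minimizer of ‖((A1 A2) − (X1 X2)) ⊙ (W1 W2)‖_F² + τ·rank(X1 X2) over all (X1 X2). Then ‖(A1 − X̂1(W)) ⊙ W1‖_F² + ‖(A2 − X̂2(W)) ⊙ W2‖_F² ≤ ‖A2 ⊙ W2‖_F² + τ·rank(A1); in particular, for every i, j, |(A1)_{ij} − (X̂1(W))_{ij}|² ≤ (‖A2 ⊙ W2‖_F² + τ·rank(A1)) / (W1)_{ij}², so that X̂1(W) → A1 as (W1)_{ij} → ∞ with W2 bounded. -/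

import Mathlib

open Matrix Filter Topology

noncomputable def frob {α β : Type*} [Fintype α] [Fintype β] (M : Matrix α β ℝ) : ℝ :=
  Real.sqrt (∑ i, ∑ j, (M i j) ^ 2)

noncomputable def projCol {m k : ℕ} (B : Matrix (Fin m) (Fin k) ℝ) :
    Matrix (Fin m) (Fin m) ℝ :=
  B * (Bᵀ * B)⁻¹ * Bᵀ

lemma frob_sq {α β : Type*} [Fintype α] [Fintype β] (M : Matrix α β ℝ) :
    frob M ^ 2 = ∑ i, ∑ j, (M i j) ^ 2 := by
  rw [frob, Real.sq_sqrt]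
  positivity

lemma frob_sq_nonneg {α β : Type*} [Fintype α] [Fintype β] (M : Matrix α β ℝ) :
    0 ≤ frob M ^ 2 := sq_nonneg _

/-- For a minimizer `(X̂1(W) X̂2(W))` of the rank-penalized weighted problem,
`‖(A1 − X̂1(W)) ⊙ W1‖_F² + ‖(A2 − X̂2(W)) ⊙ W2‖_F² ≤ ‖A2 ⊙ W2‖_F² + τ·rank A1`; in
particular `|(A1)_{ij} − (X̂1(W))_{ij}|² ≤ (‖A2 ⊙ W2‖_F² + τ·rank A1)/(W1)_{ij}²` for all
`i, j` (so that `X̂1(W) → A1` as `(W1)_{ij} → ∞` with `W2` bounded). -/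
theorem stmt_10 {m k l : ℕ}
    (A1 : Matrix (Fin m) (Fin k) ℝ) (A2 : Matrix (Fin m) (Fin l) ℝ)
    (τ : ℝ) (hτ : 0 < τ)
    (W1 : Matrix (Fin m) (Fin k) ℝ) (W2 : Matrix (Fin m) (Fin l) ℝ)
    (hW1 : ∀ i j, 0 < W1 i j)
    (X1 : Matrix (Fin m) (Fin k) ℝ) (X2 : Matrix (Fin m) (Fin l) ℝ)
    (hmin : ∀ (Y1 : Matrix (Fin m) (Fin k) ℝ) (Y2 : Matrix (Fin m) (Fin l) ℝ),
      frob (Matrix.hadamard (A1 - X1) W1) ^ 2 + frob (Matrix.hadamard (A2 - X2) W2) ^ 2 +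
          τ * ((Matrix.fromCols X1 X2).rank : ℝ) ≤
        frob (Matrix.hadamard (A1 - Y1) W1) ^ 2 + frob (Matrix.hadamard (A2 - Y2) W2) ^ 2 +
          τ * ((Matrix.fromCols Y1 Y2).rank : ℝ)) :
    (frob (Matrix.hadamard (A1 - X1) W1) ^ 2 + frob (Matrix.hadamard (A2 - X2) W2) ^ 2 ≤
      frob (Matrix.hadamard A2 W2) ^ 2 + τ * (A1.rank : ℝ)) ∧
    ∀ i j, (A1 i j - X1 i j) ^ 2 ≤
      (frob (Matrix.hadamard A2 W2) ^ 2 + τ * (A1.rank : ℝ)) / (W1 i j) ^ 2 := by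
  have hrank : (Matrix.fromCols A1 (0 : Matrix (Fin m) (Fin l) ℝ)).rank ≤ A1.rank := by
    have : Matrix.fromCols A1 (0 : Matrix (Fin m) (Fin l) ℝ) =
        A1 * Matrix.fromCols (1 : Matrix (Fin k) (Fin k) ℝ) (0 : Matrix (Fin k) (Fin l) ℝ) := by
      rw [Matrix.mul_fromCols, Matrix.mul_one, Matrix.mul_zero]
    rw [this]
    exact Matrix.rank_mul_le_left _ _
  have key := hmin A1 0
  have h0 : Matrix.hadamard (A1 - A1) W1 = 0 := by
    ext i j; simp [Matrix.hadamard]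
  have h2 : A2 - 0 = A2 := by simp
  rw [h0, h2] at key
  have hfz : frob (0 : Matrix (Fin m) (Fin k) ℝ) ^ 2 = 0 := by
    rw [frob_sq]; simp
  rw [hfz] at key
  have hmain : frob (Matrix.hadamard (A1 - X1) W1) ^ 2 +
      frob (Matrix.hadamard (A2 - X2) W2) ^ 2 ≤
      frob (Matrix.hadamard A2 W2) ^ 2 + τ * (A1.rank : ℝ) := by
    have h1 : τ * ((Matrix.fromCols A1 (0 : Matrix (Fin m) (Fin l) ℝ)).rank : ℝ) ≤
        τ * (A1.rank : ℝ) := by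
      apply mul_le_mul_of_nonneg_left _ hτ.le
      exact_mod_cast hrank
    have h2' : (0 : ℝ) ≤ τ * ((Matrix.fromCols X1 X2).rank : ℝ) := by positivity
    linarith
  refine ⟨hmain, fun i j => ?_⟩
  have hw := hW1 i j
  rw [le_div_iff₀ (by positivity)]
  have hterm : (A1 i j - X1 i j) ^ 2 * W1 i j ^ 2 ≤
      frob (Matrix.hadamard (A1 - X1) W1) ^ 2 := by
    rw [frob_sq]
    have : (A1 i j - X1 i j) ^ 2 * W1 i j ^ 2 =
        (Matrix.hadamard (A1 - X1) W1 i j) ^ 2 := by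
      simp [Matrix.hadamard, Matrix.sub_apply, mul_pow]
    rw [this]
    calc (Matrix.hadamard (A1 - X1) W1 i j) ^ 2
        ≤ ∑ j', (Matrix.hadamard (A1 - X1) W1 i j') ^ 2 :=
          Finset.single_le_sum (f := fun j' => (Matrix.hadamard (A1 - X1) W1 i j') ^ 2)
            (fun _ _ => sq_nonneg _) (Finset.mem_univ j)
      _ ≤ ∑ i', ∑ j', (Matrix.hadamard (A1 - X1) W1 i' j') ^ 2 :=
          Finset.single_le_sum
            (f := fun i' => ∑ j', (Matrix.hadamard (A1 - X1) W1 i' j') ^ 2)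
            (fun _ _ => Finset.sum_nonneg fun _ _ => sq_nonneg _) (Finset.mem_univ i)
  have := frob_sq_nonneg (Matrix.hadamard (A2 - X2) W2)
  linarith
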